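/- Let (G,E) be a self-similar groupoid action on the path space of a finite directed graph E with no sources, and let 𝒮(G,E) = {(α,g,β) : α,β ∈ E*, g ∈ G with t(g) = s(α), d(g) = s(β)} ∪ {0} with the stated operations. Then 𝒮(G,E) is an inverse semigroup: the multiplication is associative; each nonzero s = (α,g,β) satisfies s s* s = s and s* s s* = s* where s* = (β,g⁻¹,α); idempotents commute, and the nonzero idempotents are exactly the elements z_α = (α, s(α), α) for α ∈ E*. Moreover (α,g,β)(β,h,ω) = (α, gh, ω) whenever (g,h) is composable in G. -/

import Mathlib

attribute [local instance] Classical.propDecidable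

/-- A directed graph `E = (E⁰, E¹, r, s)`. -/
structure DGraph where
  V : Type
  Edge : Type
  r : Edge → V
  s : Edge → V

/-- `E.chain v l w` says that the list of edges `l` forms a path with range `v`
and source `w`: consecutive edges satisfy `r e_{i+1} = s e_i`. -/
def DGraph.chain (E : DGraph) : E.V → List E.Edge → E.V → Prop
  | v, [], w => v = w
  | v, e :: l, w => E.r e = v ∧ E.chain (E.s e) l w

theorem DGraph.chain_append (E : DGraph) :
    ∀ (l₁ : List E.Edge) (v w x : E.V) (l₂ : List E.Edge),
      E.chain v l₁ w → E.chain w l₂ x → E.chain v (l₁ ++ l₂) x := by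
  intro l₁
  induction l₁ with
  | nil =>
      intro v w x l₂ h1 h2
      have hvw : v = w := h1
      rw [List.nil_append]
      exact hvw ▸ h2
  | cons e l ih =>
      intro v w x l₂ h1 h2
      have h1' : E.r e = v ∧ E.chain (E.s e) l w := h1
      exact ⟨h1'.1, ih _ _ _ _ h1'.2 h2⟩

/-- A finite path in the graph `E`: a range vertex `r μ`, a compatible list of
edges, and a source vertex `s μ`.  Vertices are the paths with no edges. -/
structure Pth (E : DGraph) where
  rng : E.V
  edges : List E.Edge
  src : E.V
  ok : E.chain rng edges src

/-- The length-zero path at a vertex `v`. -/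
def Pth.ofVertex {E : DGraph} (v : E.V) : Pth E := ⟨v, [], v, rfl⟩

/-- The length-one path given by an edge `e`. -/
def Pth.ofEdge {E : DGraph} (e : E.Edge) : Pth E :=
  ⟨E.r e, [e], E.s e, ⟨rfl, rfl⟩⟩

/-- Concatenation `μ ν` of paths (meaningful when `r ν = s μ`; junk otherwise). -/
noncomputable def Pth.concat {E : DGraph} (μ ν : Pth E) : Pth E :=
  if h : ν.rng = μ.src then
    ⟨μ.rng, μ.edges ++ ν.edges, ν.src,
      E.chain_append μ.edges μ.rng μ.src ν.src ν.edges μ.ok (h ▸ ν.ok)⟩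
  else μ

/-- A (discrete) groupoid with unit space `V`: `d` and `t` are the domain and
terminus maps, `unit v = id_v`, and a pair `(g, h)` is composable when `d g = t h`. -/
structure VGroupoid (V : Type) (α : Type*) where
  d : α → V
  t : α → V
  mul : α → α → α
  inv : α → α
  unit : V → α
  d_unit : ∀ v, d (unit v) = v
  t_unit : ∀ v, t (unit v) = v
  d_inv : ∀ g, d (inv g) = t g
  t_inv : ∀ g, t (inv g) = d g
  d_mul : ∀ g h, d g = t h → d (mul g h) = d h
  t_mul : ∀ g h, d g = t h → t (mul g h) = t g
  mul_assoc : ∀ g h k, d g = t h → d h = t k → mul (mul g h) k = mul g (mul h k)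
  unit_mul : ∀ g, mul (unit (t g)) g = g
  mul_unit : ∀ g, mul g (unit (d g)) = g
  inv_mul : ∀ g, mul (inv g) g = unit (d g)
  mul_inv : ∀ g, mul g (inv g) = unit (t g)
  inv_inv : ∀ g, inv (inv g) = g

/-- A self-similar groupoid action `(G, E)` on the path space of the graph `E`:
a groupoid `G` with unit space `E⁰` together with a faithful action by partial
isomorphisms of the forest `T_E` — each `g ∈ G` maps `d(g) E*` bijectively onto
`t(g) E*` preserving path length, sending vertices to vertices and preserving the
edge relation of `T_E` — such that for every `g ∈ G` and every edge
`e ∈ d(g) E¹` there is a unique restriction `g|_e ∈ G` with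
`g · (e μ) = (g · e)(g|_e · μ)` for all `μ ∈ s(e) E*`. -/
structure SelfSimilar (E : DGraph) (α : Type*) extends VGroupoid E.V α where
  act : α → Pth E → Pth E
  act_rng : ∀ g μ, μ.rng = d g → (act g μ).rng = t g
  act_len : ∀ g μ, μ.rng = d g → (act g μ).edges.length = μ.edges.length
  act_vertex : ∀ g, act g (Pth.ofVertex (d g)) = Pth.ofVertex (t g)
  act_mul : ∀ g h μ, d g = t h → μ.rng = d h → act (mul g h) μ = act g (act h μ)
  act_unit : ∀ v μ, μ.rng = v → act (unit v) μ = μ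
  act_surj : ∀ g ν, ν.rng = t g → ∃ μ, μ.rng = d g ∧ act g μ = ν
  act_edge : ∀ g μ e, μ.rng = d g → E.r e = μ.src →
      ∃ e' : E.Edge, act g (μ.concat (Pth.ofEdge e)) = (act g μ).concat (Pth.ofEdge e')
  faithful : ∀ g₁ g₂, d g₁ = d g₂ → (∀ μ, μ.rng = d g₁ → act g₁ μ = act g₂ μ) → g₁ = g₂
  res : α → E.Edge → α
  res_d : ∀ g e, E.r e = d g → d (res g e) = E.s e
  res_spec : ∀ g e μ, E.r e = d g → μ.rng = E.s e →
      act g ((Pth.ofEdge e).concat μ) = (act g (Pth.ofEdge e)).concat (act (res g e) μ)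
  res_unique : ∀ g e k, E.r e = d g → d k = E.s e →
      (∀ μ, μ.rng = E.s e →
        act g ((Pth.ofEdge e).concat μ) = (act g (Pth.ofEdge e)).concat (act k μ)) →
      k = res g e

/-- Membership in the inverse semigroup `𝒮(G, E)`: the zero element (`none`) and the
triples `(α, g, β)` with `α, β ∈ E*` and `g ∈ G_{s β}^{s α}`. -/
def SGEMem {E : DGraph} {α : Type*} (S : SelfSimilar E α) :
    Option (Pth E × α × Pth E) → Prop
  | none => True
  | some x => S.t x.2.1 = x.1.src ∧ S.d x.2.1 = x.2.2.src

/-- The involution of `𝒮(G, E)`: `(α, g, β)* = (β, g⁻¹, α)` and `0* = 0`. -/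
def SGEStar {E : DGraph} {α : Type*} (S : SelfSimilar E α) :
    Option (Pth E × α × Pth E) → Option (Pth E × α × Pth E)
  | none => none
  | some x => some (x.2.2, S.inv x.2.1, x.1)

section AuxPath

variable {E : DGraph} {α : Type*}

theorem Aux.chain_src_unique (E : DGraph) : ∀ (l : List E.Edge) (v w w' : E.V),
    E.chain v l w → E.chain v l w' → w = w' := by
  intro l
  induction l with
  | nil => intro v w w' h h'; exact (show v = w from h).symm.trans h'
  | cons e t ih =>
      intro v w w' h h'
      have h1 : E.r e = v ∧ E.chain (E.s e) t w := h
      have h2 : E.r e = v ∧ E.chain (E.s e) t w' := h'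
      exact ih _ _ _ h1.2 h2.2

theorem Aux.chain_split (E : DGraph) : ∀ (l₁ l₂ : List E.Edge) (v w : E.V),
    E.chain v (l₁ ++ l₂) w → ∃ u, E.chain v l₁ u ∧ E.chain u l₂ w := by
  intro l₁
  induction l₁ with
  | nil => intro l₂ v w h; exact ⟨v, rfl, h⟩
  | cons e t ih =>
      intro l₂ v w h
      have h1 : E.r e = v ∧ E.chain (E.s e) (t ++ l₂) w := h
      obtain ⟨u, hu1, hu2⟩ := ih l₂ (E.s e) w h1.2
      exact ⟨u, ⟨h1.1, hu1⟩, hu2⟩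

theorem Aux.pext {μ ν : Pth E} (h1 : μ.rng = ν.rng) (h2 : μ.edges = ν.edges)
    (h3 : μ.src = ν.src) : μ = ν := by
  cases μ; cases ν
  simp only at h1 h2 h3
  subst h1; subst h2; subst h3
  rfl

theorem Aux.concat_rng {μ ν : Pth E} (h : ν.rng = μ.src) :
    (μ.concat ν).rng = μ.rng := by
  unfold Pth.concat; rw [dif_pos h]

theorem Aux.concat_edges {μ ν : Pth E} (h : ν.rng = μ.src) :
    (μ.concat ν).edges = μ.edges ++ ν.edges := by
  unfold Pth.concat; rw [dif_pos h]

theorem Aux.concat_src {μ ν : Pth E} (h : ν.rng = μ.src) :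
    (μ.concat ν).src = ν.src := by
  unfold Pth.concat; rw [dif_pos h]

theorem Aux.vertex_rng {v : E.V} : (Pth.ofVertex v).rng = v := rfl
theorem Aux.vertex_src {v : E.V} : (Pth.ofVertex v).src = v := rfl

theorem Aux.concat_vertex {μ : Pth E} : μ.concat (Pth.ofVertex μ.src) = μ :=
  Aux.pext (Aux.concat_rng rfl) (by rw [Aux.concat_edges rfl]; exact List.append_nil _)
    (Aux.concat_src rfl)

theorem Aux.vertex_concat {μ : Pth E} {v : E.V} (h : μ.rng = v) :
    (Pth.ofVertex v).concat μ = μ :=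
  Aux.pext ((Aux.concat_rng h).trans h.symm) (Aux.concat_edges h) (Aux.concat_src h)

theorem Aux.concat_assoc {μ ν ρ : Pth E} (hν : ν.rng = μ.src) (hρ : ρ.rng = ν.src) :
    (μ.concat ν).concat ρ = μ.concat (ν.concat ρ) := by
  have h1 : ρ.rng = (μ.concat ν).src := hρ.trans (Aux.concat_src hν).symm
  have h2 : (ν.concat ρ).rng = μ.src := (Aux.concat_rng hρ).trans hν
  apply Aux.pext
  · rw [Aux.concat_rng h1, Aux.concat_rng hν, Aux.concat_rng h2]
  · rw [Aux.concat_edges h1, Aux.concat_edges hν, Aux.concat_edges h2,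
      Aux.concat_edges hρ, List.append_assoc]
  · rw [Aux.concat_src h1, Aux.concat_src h2, Aux.concat_src hρ]

theorem Aux.concat_cancel {μ ν ν' : Pth E} (h : ν.rng = μ.src) (h' : ν'.rng = μ.src)
    (he : μ.concat ν = μ.concat ν') : ν = ν' := by
  apply Aux.pext (h.trans h'.symm)
  · have := congrArg Pth.edges he
    rw [Aux.concat_edges h, Aux.concat_edges h'] at this
    exact List.append_cancel_left this
  · have := congrArg Pth.src he
    rwa [Aux.concat_src h, Aux.concat_src h'] at this

theorem Aux.nil_src {μ : Pth E} (h : μ.edges = []) : μ.rng = μ.src := by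
  have := μ.ok; rw [h] at this; exact this

theorem Aux.eq_vertex {μ : Pth E} (h : μ.edges = []) : μ = Pth.ofVertex μ.src :=
  Aux.pext (Aux.nil_src h) h rfl

theorem Aux.extend_of_edges {b l : Pth E} (hr : b.rng = l.rng)
    (rest : List E.Edge) (hp : l.edges = b.edges ++ rest) :
    ∃ μ : Pth E, μ.rng = b.src ∧ l = b.concat μ := by
  have hok : E.chain l.rng (b.edges ++ rest) l.src := by rw [← hp]; exact l.ok
  obtain ⟨u, h1, h2⟩ := Aux.chain_split E b.edges rest l.rng l.src hok
  have hu : u = b.src := Aux.chain_src_unique E b.edges l.rng u b.src h1 (hr ▸ b.ok)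
  subst hu
  have hc : (⟨b.src, rest, l.src, h2⟩ : Pth E).rng = b.src := rfl
  refine ⟨⟨b.src, rest, l.src, h2⟩, rfl, ?_⟩
  exact Aux.pext (hr.symm.trans (Aux.concat_rng hc).symm)
    (hp.trans (Aux.concat_edges hc).symm) (Aux.concat_src hc).symm

theorem Aux.comparable {b l σ θ : Pth E} (hσ : σ.rng = b.src) (hθ : θ.rng = l.src)
    (h : b.concat σ = l.concat θ) :
    (∃ μ : Pth E, μ.rng = l.src ∧ b = l.concat μ) ∨
    (∃ μ : Pth E, μ.rng = b.src ∧ l = b.concat μ) := by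
  have hr : b.rng = l.rng := by
    have := congrArg Pth.rng h; rwa [Aux.concat_rng hσ, Aux.concat_rng hθ] at this
  have hedges : b.edges ++ σ.edges = l.edges ++ θ.edges := by
    have := congrArg Pth.edges h; rwa [Aux.concat_edges hσ, Aux.concat_edges hθ] at this
  rcases le_total b.edges.length l.edges.length with hle | hle
  · right
    apply Aux.extend_of_edges hr (l.edges.drop b.edges.length)
    have h1 : b.edges = l.edges.take b.edges.length := by
      calc b.edges = (b.edges ++ σ.edges).take b.edges.length := List.take_left.symm
        _ = (l.edges ++ θ.edges).take b.edges.length := by rw [hedges]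
        _ = l.edges.take b.edges.length := List.take_append_of_le_length hle
    conv_lhs => rw [← List.take_append_drop b.edges.length l.edges]
    rw [← h1]
  · left
    apply Aux.extend_of_edges hr.symm (b.edges.drop l.edges.length)
    have h1 : l.edges = b.edges.take l.edges.length := by
      calc l.edges = (l.edges ++ θ.edges).take l.edges.length := List.take_left.symm
        _ = (b.edges ++ σ.edges).take l.edges.length := by rw [hedges]
        _ = b.edges.take l.edges.length := List.take_append_of_le_length hle
    conv_lhs => rw [← List.take_append_drop l.edges.length b.edges]
    rw [← h1]

end AuxPath
section AuxAct

variable {E : DGraph} {α : Type*} (S : SelfSimilar E α)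

theorem Aux.act_inv_act {g : α} {μ : Pth E} (h : μ.rng = S.d g) :
    S.act (S.inv g) (S.act g μ) = μ := by
  have h1 : S.d (S.inv g) = S.t g := S.d_inv g
  have h2 := S.act_mul (S.inv g) g μ h1 h
  rw [← h2, S.inv_mul, S.act_unit _ _ h]

theorem Aux.act_act_inv {g : α} {ν : Pth E} (h : ν.rng = S.t g) :
    S.act g (S.act (S.inv g) ν) = ν := by
  have := Aux.act_inv_act S (g := S.inv g) (μ := ν) (by rw [S.d_inv]; exact h)
  rwa [S.inv_inv] at this

theorem Aux.inv_unit (v : E.V) : S.inv (S.unit v) = S.unit v := by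
  have h1 := S.mul_unit (S.inv (S.unit v))
  rw [S.d_inv, S.t_unit] at h1
  have h2 := S.inv_mul (S.unit v)
  rw [S.d_unit] at h2
  rw [← h1, h2]

theorem Aux.idem_unit {g : α} (hd : S.d g = S.t g) (h : S.mul g g = g) :
    g = S.unit (S.t g) := by
  have h1 : S.mul (S.mul g g) (S.inv g) = S.mul g (S.inv g) := by rw [h]
  rw [S.mul_assoc g g (S.inv g) hd (S.t_inv g).symm, S.mul_inv] at h1
  rw [← h1, ← hd, S.mul_unit]

variable (hns : ∀ v : E.V, ∃ e : E.Edge, E.r e = v)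
  (resP : α → Pth E → α)
  (hres_d : ∀ g μ, μ.rng = S.d g → S.d (resP g μ) = μ.src)
  (hres_spec : ∀ g μ ν, μ.rng = S.d g → ν.rng = μ.src →
      S.act g (μ.concat ν) = (S.act g μ).concat (S.act (resP g μ) ν))

include hns hres_d hres_spec

theorem Aux.res_t {g : α} {μ : Pth E} (hμ : μ.rng = S.d g) :
    S.t (resP g μ) = (S.act g μ).src := by
  obtain ⟨e, he⟩ := hns μ.src
  have hν : (Pth.ofEdge e).rng = μ.src := he
  have hd : S.d (resP g μ) = μ.src := hres_d g μ hμ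
  have hspec := hres_spec g μ (Pth.ofEdge e) hμ hν
  by_contra hne
  have hrng : (S.act (resP g μ) (Pth.ofEdge e)).rng = S.t (resP g μ) :=
    S.act_rng _ _ (hν.trans hd.symm)
  have hjunk : (S.act g μ).concat (S.act (resP g μ) (Pth.ofEdge e)) = S.act g μ := by
    unfold Pth.concat
    rw [dif_neg (fun hc => hne (hrng.symm.trans hc))]
  rw [hjunk] at hspec
  have h1 : (S.act g (μ.concat (Pth.ofEdge e))).edges.length
      = (μ.concat (Pth.ofEdge e)).edges.length :=
    S.act_len _ _ (by rw [Aux.concat_rng hν]; exact hμ)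
  rw [hspec, Aux.concat_edges hν] at h1
  have h2 := S.act_len g μ hμ
  have h3 : (Pth.ofEdge e).edges.length = 1 := rfl
  rw [List.length_append, h3] at h1
  omega

theorem Aux.res_vertex {g : α} : resP g (Pth.ofVertex (S.d g)) = g := by
  have hd : S.d (resP g (Pth.ofVertex (S.d g))) = S.d g :=
    hres_d g _ Aux.vertex_rng
  apply S.faithful _ _ hd
  intro ν hν
  have hν' : ν.rng = S.d g := hν.trans hd
  have hspec := hres_spec g (Pth.ofVertex (S.d g)) ν Aux.vertex_rng hν'
  rw [Aux.vertex_concat hν', S.act_vertex] at hspec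
  have ht : S.t (resP g (Pth.ofVertex (S.d g))) = S.t g := by
    rw [Aux.res_t S hns resP hres_d hres_spec Aux.vertex_rng, S.act_vertex,
      Aux.vertex_src]
  have hr : (S.act (resP g (Pth.ofVertex (S.d g))) ν).rng = S.t g := by
    rw [S.act_rng (resP g (Pth.ofVertex (S.d g))) ν hν]; exact ht
  rw [Aux.vertex_concat hr] at hspec
  exact hspec.symm

theorem Aux.res_unit {v : E.V} {μ : Pth E} (hμ : μ.rng = v) :
    resP (S.unit v) μ = S.unit μ.src := by
  have hμ' : μ.rng = S.d (S.unit v) := by rw [S.d_unit]; exact hμ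
  have hd : S.d (resP (S.unit v) μ) = μ.src := hres_d _ μ hμ'
  apply S.faithful _ _ (by rw [hd, S.d_unit])
  intro ν hν
  have hν' : ν.rng = μ.src := hν.trans hd
  have hspec := hres_spec (S.unit v) μ ν hμ' hν'
  rw [S.act_unit v μ hμ, S.act_unit v _ ((Aux.concat_rng hν').trans hμ)] at hspec
  have hr : (S.act (resP (S.unit v) μ) ν).rng = μ.src := by
    rw [S.act_rng (resP (S.unit v) μ) ν hν,
      Aux.res_t S hns resP hres_d hres_spec hμ', S.act_unit v μ hμ]
  have := Aux.concat_cancel hν' hr hspec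
  rw [← this, S.act_unit _ _ hν']

end AuxAct
noncomputable def Aux.rp {E : DGraph} {α : Type*} (S : SelfSimilar E α) :
    Option (Pth E × α × Pth E) → Pth E → Option (Pth E)
  | none, _ => none
  | some (a, g, b), π =>
      if h : ∃ μ : Pth E, μ.rng = b.src ∧ π = b.concat μ then
        some (a.concat (S.act g h.choose))
      else none

section AuxRp

variable {E : DGraph} {α : Type*} (S : SelfSimilar E α)

theorem Aux.rp_none (π : Pth E) : Aux.rp S none π = none := rfl

theorem Aux.rp_eq (a : Pth E) (g : α) (b π : Pth E) :
    Aux.rp S (some (a, g, b)) π =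
      if h : ∃ μ : Pth E, μ.rng = b.src ∧ π = b.concat μ then
        some (a.concat (S.act g h.choose))
      else none := rfl

theorem Aux.rp_not (a : Pth E) (g : α) (b π : Pth E)
    (h : ¬∃ μ : Pth E, μ.rng = b.src ∧ π = b.concat μ) :
    Aux.rp S (some (a, g, b)) π = none := by
  rw [Aux.rp_eq, dif_neg h]

theorem Aux.rp_some (a : Pth E) (g : α) (b μ : Pth E) (hμ : μ.rng = b.src) :
    Aux.rp S (some (a, g, b)) (b.concat μ) = some (a.concat (S.act g μ)) := by
  have hex : ∃ ν : Pth E, ν.rng = b.src ∧ b.concat μ = b.concat ν := ⟨μ, hμ, rfl⟩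
  rw [Aux.rp_eq, dif_pos hex]
  have hspec := hex.choose_spec
  have : hex.choose = μ := Aux.concat_cancel hspec.1 hμ hspec.2.symm
  rw [this]

end AuxRp
/-- Let `(G, E)` be a self-similar groupoid action on the path
space of a finite directed graph `E` with no sources, and let
`𝒮(G, E) = {(α, g, β) : α, β ∈ E*, g ∈ G_{s β}^{s α}} ∪ {0}` with the multiplication
`(α, g, β)(λ, h, ω) = (α, g (h|_{h⁻¹·μ}), ω (h⁻¹·μ))` if `β = λ μ`,
`= (α (g·μ), g|_μ h, ω)` if `λ = β μ`, `= 0` otherwise, and involution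
`(α, g, β)* = (β, g⁻¹, α)`.  Then `𝒮(G, E)` is an inverse semigroup: the
multiplication is associative, every `s` satisfies `s s* s = s` and
`s* s s* = s*`, idempotents commute, and the nonzero idempotents are exactly the
elements `z_α = (α, s α, α)` for `α ∈ E*`.  Moreover
`(α, g, β)(β, h, ω) = (α, g h, ω)` whenever `(g, h)` is composable in `G`.
(Here `g|_μ` (`resP g μ`) denotes the restriction along a path.) -/
theorem selfSimilar_inverse_semigroup {α : Type*} (E : DGraph)
    [Fintype E.V] [Fintype E.Edge] (hns : ∀ v : E.V, ∃ e : E.Edge, E.r e = v)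
    (S : SelfSimilar E α) (resP : α → Pth E → α)
    (hres_d : ∀ g μ, μ.rng = S.d g → S.d (resP g μ) = μ.src)
    (hres_spec : ∀ g μ ν, μ.rng = S.d g → ν.rng = μ.src →
        S.act g (μ.concat ν) = (S.act g μ).concat (S.act (resP g μ) ν))
    (m : Option (Pth E × α × Pth E) → Option (Pth E × α × Pth E) →
        Option (Pth E × α × Pth E))
    (hzero_l : ∀ x, m none x = none)
    (hzero_r : ∀ x, m x none = none)
    (hcase1 : ∀ (a : Pth E) (g : α) (b l : Pth E) (h : α) (w μ : Pth E),
        S.t g = a.src → S.d g = b.src → S.t h = l.src → S.d h = w.src →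
        μ.rng = l.src → b = l.concat μ →
        m (some (a, g, b)) (some (l, h, w)) =
          some (a, S.mul g (resP h (S.act (S.inv h) μ)),
            w.concat (S.act (S.inv h) μ)))
    (hcase2 : ∀ (a : Pth E) (g : α) (b l : Pth E) (h : α) (w μ : Pth E),
        S.t g = a.src → S.d g = b.src → S.t h = l.src → S.d h = w.src →
        μ.rng = b.src → l = b.concat μ →
        m (some (a, g, b)) (some (l, h, w)) =
          some (a.concat (S.act g μ), S.mul (resP g μ) h, w))
    (hcase3 : ∀ (a : Pth E) (g : α) (b l : Pth E) (h : α) (w : Pth E),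
        S.t g = a.src → S.d g = b.src → S.t h = l.src → S.d h = w.src →
        (¬∃ μ : Pth E, μ.rng = l.src ∧ b = l.concat μ) →
        (¬∃ μ : Pth E, μ.rng = b.src ∧ l = b.concat μ) →
        m (some (a, g, b)) (some (l, h, w)) = none) :
    (∀ x y z, SGEMem S x → SGEMem S y → SGEMem S z →
        m (m x y) z = m x (m y z)) ∧
    (∀ x, SGEMem S x →
        m (m x (SGEStar S x)) x = x ∧
        m (m (SGEStar S x) x) (SGEStar S x) = SGEStar S x) ∧
    (∀ x y, SGEMem S x → SGEMem S y → m x x = x → m y y = y → m x y = m y x) ∧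
    (∀ x, SGEMem S x → x ≠ none →
        (m x x = x ↔ ∃ a : Pth E, x = some (a, S.unit a.src, a))) ∧
    (∀ (a : Pth E) (g : α) (b : Pth E) (h : α) (w : Pth E),
        S.t g = a.src → S.d g = b.src → S.t h = b.src → S.d h = w.src →
        S.d g = S.t h →
        m (some (a, g, b)) (some (b, h, w)) = some (a, S.mul g h, w)) := by
  have hresT : ∀ (g : α) (μ : Pth E), μ.rng = S.d g →
      S.t (resP g μ) = (S.act g μ).src :=
    fun g μ h => Aux.res_t S hns resP hres_d hres_spec h
  have hresV : ∀ g : α, resP g (Pth.ofVertex (S.d g)) = g :=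
    fun g => Aux.res_vertex S hns resP hres_d hres_spec
  have hresU : ∀ (v : E.V) (μ : Pth E), μ.rng = v → resP (S.unit v) μ = S.unit μ.src :=
    fun v μ h => Aux.res_unit S hns resP hres_d hres_spec h
  -- the composable multiplication formula (bullet 5)
  have hcomp : ∀ (a : Pth E) (g : α) (b : Pth E) (h : α) (w : Pth E),
      S.t g = a.src → S.d g = b.src → S.t h = b.src → S.d h = w.src →
      S.d g = S.t h →
      m (some (a, g, b)) (some (b, h, w)) = some (a, S.mul g h, w) := by
    intro a g b h w hga hgb hhb hhw hc
    have hvr : (Pth.ofVertex b.src).rng = b.src := rfl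
    have hbe : b = b.concat (Pth.ofVertex b.src) := Aux.concat_vertex.symm
    rw [hcase1 a g b b h w (Pth.ofVertex b.src) hga hgb hhb hhw hvr hbe]
    have h1 : S.act (S.inv h) (Pth.ofVertex b.src) = Pth.ofVertex (S.d h) := by
      have hb : b.src = S.d (S.inv h) := by rw [S.d_inv]; exact hhb.symm
      rw [hb, S.act_vertex, S.t_inv]
    rw [h1, hresV h, hhw, Aux.concat_vertex]
  -- products of members are members
  have hmem : ∀ x y, SGEMem S x → SGEMem S y → SGEMem S (m x y) := by
    rintro (_ | ⟨a, g, b⟩) (_ | ⟨p, h, q⟩) hx hy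
    · rw [hzero_l]; trivial
    · rw [hzero_l]; trivial
    · rw [hzero_r]; trivial
    · have hga : S.t g = a.src := hx.1
      have hgb : S.d g = b.src := hx.2
      have hhp : S.t h = p.src := hy.1
      have hhq : S.d h = q.src := hy.2
      by_cases h1 : ∃ μ : Pth E, μ.rng = p.src ∧ b = p.concat μ
      · obtain ⟨μ, hμr, hμe⟩ := h1
        rw [hcase1 a g b p h q μ hga hgb hhp hhq hμr hμe]
        have hμt : μ.rng = S.d (S.inv h) := by rw [S.d_inv]; exact hμr.trans hhp.symm
        have hνr : (S.act (S.inv h) μ).rng = S.d h := by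
          rw [S.act_rng _ _ hμt, S.t_inv]
        have hact : S.act h (S.act (S.inv h) μ) = μ :=
          Aux.act_act_inv S (hμr.trans hhp.symm)
        have hrt : S.t (resP h (S.act (S.inv h) μ)) = μ.src := by
          rw [hresT h _ hνr, hact]
        have hbsrc : b.src = μ.src := by rw [hμe, Aux.concat_src hμr]
        have hcm : S.d g = S.t (resP h (S.act (S.inv h) μ)) := by
          rw [hrt, ← hbsrc]; exact hgb
        refine ⟨?_, ?_⟩
        · show S.t (S.mul g (resP h (S.act (S.inv h) μ))) = a.src
          rw [S.t_mul _ _ hcm]; exact hga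
        · show S.d (S.mul g (resP h (S.act (S.inv h) μ)))
            = (q.concat (S.act (S.inv h) μ)).src
          rw [S.d_mul _ _ hcm, hres_d h _ hνr, Aux.concat_src (hνr.trans hhq)]
      · by_cases h2 : ∃ μ : Pth E, μ.rng = b.src ∧ p = b.concat μ
        · obtain ⟨μ, hμr, hμe⟩ := h2
          rw [hcase2 a g b p h q μ hga hgb hhp hhq hμr hμe]
          have hμd : μ.rng = S.d g := hμr.trans hgb.symm
          have hrt : S.t (resP g μ) = (S.act g μ).src := hresT g μ hμd
          have hcm : S.d (resP g μ) = S.t h := by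
            rw [hres_d g μ hμd, hhp, hμe, Aux.concat_src hμr]
          refine ⟨?_, ?_⟩
          · show S.t (S.mul (resP g μ) h) = (a.concat (S.act g μ)).src
            rw [S.t_mul _ _ hcm, hrt,
              Aux.concat_src ((S.act_rng g μ hμd).trans hga)]
          · show S.d (S.mul (resP g μ) h) = q.src
            rw [S.d_mul _ _ hcm]; exact hhq
        · rw [hcase3 a g b p h q hga hgb hhp hhq h1 h2]; trivial
  -- the representation is multiplicative
  have hrpmul : ∀ x y, SGEMem S x → SGEMem S y →
      Aux.rp S (m x y) = fun π => (Aux.rp S y π).bind (Aux.rp S x) := by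
    rintro (_ | ⟨a, g, b⟩) (_ | ⟨p, h, q⟩) hx hy
    · rw [hzero_l]; funext π; rfl
    · rw [hzero_l]; funext π
      cases Aux.rp S (some (p, h, q)) π <;> rfl
    · rw [hzero_r]; funext π; rfl
    · have hga : S.t g = a.src := hx.1
      have hgb : S.d g = b.src := hx.2
      have hhp : S.t h = p.src := hy.1
      have hhq : S.d h = q.src := hy.2
      by_cases h1 : ∃ μ : Pth E, μ.rng = p.src ∧ b = p.concat μ
      · obtain ⟨μ, hμr, hμe⟩ := h1
        rw [hcase1 a g b p h q μ hga hgb hhp hhq hμr hμe]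
        set ν := S.act (S.inv h) μ with hνdef
        have hμt : μ.rng = S.d (S.inv h) := by rw [S.d_inv]; exact hμr.trans hhp.symm
        have hνr : ν.rng = S.d h := by rw [hνdef, S.act_rng _ _ hμt, S.t_inv]
        have hνq : ν.rng = q.src := hνr.trans hhq
        have hact : S.act h ν = μ := Aux.act_act_inv S (hμr.trans hhp.symm)
        have hrt : S.t (resP h ν) = μ.src := by rw [hresT h ν hνr, hact]
        have hrd : S.d (resP h ν) = ν.src := hres_d h ν hνr
        have hbsrc : b.src = μ.src := by rw [hμe, Aux.concat_src hμr]
        have hcm : S.d g = S.t (resP h ν) := by rw [hrt, ← hbsrc]; exact hgb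
        funext π
        by_cases hd : ∃ ρ : Pth E, ρ.rng = (q.concat ν).src ∧ π = (q.concat ν).concat ρ
        · obtain ⟨ρ, hρr, hρe⟩ := hd
          have hρν : ρ.rng = ν.src := hρr.trans (Aux.concat_src hνq)
          have hρd : ρ.rng = S.d (resP h ν) := hρν.trans hrd.symm
          rw [hρe, Aux.rp_some S a (S.mul g (resP h ν)) (q.concat ν) ρ hρr]
          have hπ : (q.concat ν).concat ρ = q.concat (ν.concat ρ) :=
            Aux.concat_assoc hνq hρν
          have hνρq : (ν.concat ρ).rng = q.src := (Aux.concat_rng hρν).trans hνq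
          rw [hπ, Aux.rp_some S p h q (ν.concat ρ) hνρq, Option.bind_some]
          have hsp : S.act h (ν.concat ρ) = μ.concat (S.act (resP h ν) ρ) := by
            rw [hres_spec h ν ρ hνr hρν, hact]
          have hτμ : (S.act (resP h ν) ρ).rng = μ.src := by
            rw [S.act_rng _ _ hρd]; exact hrt
          rw [hsp, ← Aux.concat_assoc hμr hτμ, ← hμe]
          have hτb : (S.act (resP h ν) ρ).rng = b.src := hτμ.trans hbsrc.symm
          rw [Aux.rp_some S a g b (S.act (resP h ν) ρ) hτb,
            S.act_mul g (resP h ν) ρ hcm hρd]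
        · rw [Aux.rp_not S a (S.mul g (resP h ν)) (q.concat ν) π hd]
          by_cases hyd : ∃ σ : Pth E, σ.rng = q.src ∧ π = q.concat σ
          · obtain ⟨σ, hσr, hσe⟩ := hyd
            rw [hσe, Aux.rp_some S p h q σ hσr, Option.bind_some]
            refine (Aux.rp_not S a g b (p.concat (S.act h σ)) ?_).symm
            rintro ⟨τ, hτr, hτe⟩
            have hσd : σ.rng = S.d h := hσr.trans hhq.symm
            have hθ : (S.act h σ).rng = p.src := by
              rw [S.act_rng h σ hσd]; exact hhp
            have hτμ : τ.rng = μ.src := hτr.trans hbsrc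
            have hbτ : b.concat τ = p.concat (μ.concat τ) := by
              rw [hμe, Aux.concat_assoc hμr hτμ]
            rw [hbτ] at hτe
            have hcan : S.act h σ = μ.concat τ :=
              Aux.concat_cancel hθ ((Aux.concat_rng hτμ).trans hμr) hτe
            have hσ2 : σ = S.act (S.inv h) (μ.concat τ) := by
              rw [← hcan, Aux.act_inv_act S hσd]
            have hsp2 : S.act (S.inv h) (μ.concat τ)
                = ν.concat (S.act (resP (S.inv h) μ) τ) := by
              rw [hres_spec (S.inv h) μ τ hμt hτμ, ← hνdef]
            have hρ'r : (S.act (resP (S.inv h) μ) τ).rng = ν.src := by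
              rw [S.act_rng (resP (S.inv h) μ) τ
                  (hτμ.trans (hres_d (S.inv h) μ hμt).symm),
                hresT (S.inv h) μ hμt, ← hνdef]
            exact hd ⟨S.act (resP (S.inv h) μ) τ,
              hρ'r.trans (Aux.concat_src hνq).symm,
              by rw [hσe, hσ2, hsp2, ← Aux.concat_assoc hνq hρ'r]⟩
          · rw [Aux.rp_not S p h q π hyd]; rfl
      · by_cases h2 : ∃ μ : Pth E, μ.rng = b.src ∧ p = b.concat μ
        · obtain ⟨μ, hμr, hμe⟩ := h2
          rw [hcase2 a g b p h q μ hga hgb hhp hhq hμr hμe]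
          have hμd : μ.rng = S.d g := hμr.trans hgb.symm
          have hrd : S.d (resP g μ) = μ.src := hres_d g μ hμd
          have hrt : S.t (resP g μ) = (S.act g μ).src := hresT g μ hμd
          have hpsrc : p.src = μ.src := by rw [hμe, Aux.concat_src hμr]
          have hcm : S.d (resP g μ) = S.t h := by rw [hrd, hhp, hpsrc]
          have hag : (S.act g μ).rng = a.src := by rw [S.act_rng g μ hμd]; exact hga
          funext π
          by_cases hyd : ∃ σ : Pth E, σ.rng = q.src ∧ π = q.concat σ
          · obtain ⟨σ, hσr, hσe⟩ := hyd
            have hσd : σ.rng = S.d h := hσr.trans hhq.symm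
            rw [hσe, Aux.rp_some S (a.concat (S.act g μ)) (S.mul (resP g μ) h) q σ hσr,
              Aux.rp_some S p h q σ hσr, Option.bind_some]
            have hθ : (S.act h σ).rng = μ.src := by
              rw [S.act_rng h σ hσd, hhp, hpsrc]
            have hpθ : p.concat (S.act h σ) = b.concat (μ.concat (S.act h σ)) := by
              rw [hμe, Aux.concat_assoc hμr hθ]
            rw [hpθ, Aux.rp_some S a g b (μ.concat (S.act h σ))
              ((Aux.concat_rng hθ).trans hμr)]
            rw [hres_spec g μ (S.act h σ) hμd hθ]
            have hrθ : (S.act (resP g μ) (S.act h σ)).rng = (S.act g μ).src := by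
              rw [S.act_rng (resP g μ) (S.act h σ) (hθ.trans hrd.symm)]; exact hrt
            rw [← Aux.concat_assoc hag hrθ, S.act_mul (resP g μ) h σ hcm hσd]
          · rw [Aux.rp_not S (a.concat (S.act g μ)) (S.mul (resP g μ) h) q π hyd,
              Aux.rp_not S p h q π hyd]
            rfl
        · rw [hcase3 a g b p h q hga hgb hhp hhq h1 h2]
          funext π
          rw [Aux.rp_none]
          by_cases hyd : ∃ σ : Pth E, σ.rng = q.src ∧ π = q.concat σ
          · obtain ⟨σ, hσr, hσe⟩ := hyd
            rw [hσe, Aux.rp_some S p h q σ hσr, Option.bind_some]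
            refine (Aux.rp_not S a g b (p.concat (S.act h σ)) ?_).symm
            rintro ⟨τ, hτr, hτe⟩
            have hθ : (S.act h σ).rng = p.src := by
              rw [S.act_rng h σ (hσr.trans hhq.symm)]; exact hhp
            rcases Aux.comparable hτr hθ hτe.symm with hc | hc
            · exact h1 hc
            · exact h2 hc
          · rw [Aux.rp_not S p h q π hyd]; rfl
  -- evaluation at the right-hand path
  have hself : ∀ (p : Pth E) (h : α) (q : Pth E), S.t h = p.src → S.d h = q.src →
      Aux.rp S (some (p, h, q)) q = some p := by
    intro p h q hhp hhq
    calc Aux.rp S (some (p, h, q)) q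
        = Aux.rp S (some (p, h, q)) (q.concat (Pth.ofVertex q.src)) := by
          rw [Aux.concat_vertex]
      _ = some (p.concat (S.act h (Pth.ofVertex q.src))) :=
          Aux.rp_some S p h q (Pth.ofVertex q.src) rfl
      _ = some p := by rw [← hhq, S.act_vertex, hhp, Aux.concat_vertex]
  -- the representation is injective on members
  have hinj : ∀ x y, SGEMem S x → SGEMem S y → Aux.rp S x = Aux.rp S y → x = y := by
    rintro (_ | ⟨a, g, b⟩) (_ | ⟨p, h, q⟩) hx hy he
    · rfl
    · exfalso
      have hc := congrFun he q
      rw [hself p h q hy.1 hy.2, Aux.rp_none] at hc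
      exact nomatch hc
    · exfalso
      have hc := congrFun he b
      rw [hself a g b hx.1 hx.2, Aux.rp_none] at hc
      exact nomatch hc
    · have hga : S.t g = a.src := hx.1
      have hgb : S.d g = b.src := hx.2
      have hhp : S.t h = p.src := hy.1
      have hhq : S.d h = q.src := hy.2
      have e1 : Aux.rp S (some (p, h, q)) b = some a := by
        rw [← congrFun he b, hself a g b hga hgb]
      have e2 : Aux.rp S (some (a, g, b)) q = some p := by
        rw [congrFun he q, hself p h q hhp hhq]
      have hbq : ∃ τ : Pth E, τ.rng = q.src ∧ b = q.concat τ := by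
        by_contra hcon
        rw [Aux.rp_not S p h q b hcon] at e1
        exact nomatch e1
      have hqb : ∃ τ : Pth E, τ.rng = b.src ∧ q = b.concat τ := by
        by_contra hcon
        rw [Aux.rp_not S a g b q hcon] at e2
        exact nomatch e2
      obtain ⟨τ, hτr, hτe⟩ := hbq
      obtain ⟨τ', hτr', hτe'⟩ := hqb
      have hlen : τ.edges.length = 0 := by
        have l1 := congrArg (fun z : Pth E => z.edges.length) hτe
        have l2 := congrArg (fun z : Pth E => z.edges.length) hτe'
        simp only [Aux.concat_edges hτr, Aux.concat_edges hτr',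
          List.length_append] at l1 l2
        omega
      have hτnil : τ.edges = [] := List.length_eq_zero_iff.mp hlen
      have hτv : τ = Pth.ofVertex q.src :=
        Aux.pext hτr hτnil ((Aux.nil_src hτnil).symm.trans hτr)
      have hbq2 : b = q := by rw [hτe, hτv, Aux.concat_vertex]
      have hap : a = p := by
        rw [hbq2, hself p h q hhp hhq] at e1
        injection e1 with e1'
        exact e1'.symm
      have hgh : g = h := by
        apply S.faithful g h (by rw [hgb, hbq2, ← hhq])
        intro ν hν
        have hν' : ν.rng = b.src := hν.trans hgb
        have hν'' : ν.rng = q.src := by rw [hν', hbq2]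
        have c1 := congrFun he (b.concat ν)
        rw [Aux.rp_some S a g b ν hν',
          show b.concat ν = q.concat ν by rw [hbq2],
          Aux.rp_some S p h q ν hν''] at c1
        injection c1 with c2
        rw [← hap] at c2
        have r1 : (S.act g ν).rng = a.src := by rw [S.act_rng g ν hν]; exact hga
        have r2 : (S.act h ν).rng = a.src := by
          rw [S.act_rng h ν (hν''.trans hhq.symm), hhp, ← hap]
        exact Aux.concat_cancel r1 r2 c2
      rw [hap, hgh, hbq2]
  -- associativity
  have hassoc : ∀ x y z, SGEMem S x → SGEMem S y → SGEMem S z →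
      m (m x y) z = m x (m y z) := by
    intro x y z hx hy hz
    apply hinj _ _ (hmem _ _ (hmem _ _ hx hy) hz) (hmem _ _ hx (hmem _ _ hy hz))
    rw [hrpmul _ _ (hmem _ _ hx hy) hz, hrpmul _ _ hx hy,
      hrpmul _ _ hx (hmem _ _ hy hz), hrpmul _ _ hy hz]
    have hb : ∀ (o : Option (Pth E)) (f1 f2 : Pth E → Option (Pth E)),
        (o.bind f1).bind f2 = o.bind (fun t => (f1 t).bind f2) := by
      intro o f1 f2; cases o <;> rfl
    funext π
    show (Aux.rp S z π).bind (fun t => (Aux.rp S y t).bind (Aux.rp S x))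
        = ((Aux.rp S z π).bind (Aux.rp S y)).bind (Aux.rp S x)
    rw [hb]
  -- s s* s = s and s* s s* = s*
  have hsss : ∀ x, SGEMem S x →
      m (m x (SGEStar S x)) x = x ∧
      m (m (SGEStar S x) x) (SGEStar S x) = SGEStar S x := by
    rintro (_ | ⟨a, g, b⟩) hx
    · have hstar0 : SGEStar S none = none := rfl
      rw [hstar0]
      constructor <;> rw [hzero_l, hzero_l]
    · have hga : S.t g = a.src := hx.1
      have hgb : S.d g = b.src := hx.2
      have hstar : SGEStar S (some (a, g, b)) = some (b, S.inv g, a) := rfl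
      rw [hstar]
      constructor
      · have s1 : m (some (a, g, b)) (some (b, S.inv g, a))
            = some (a, S.mul g (S.inv g), a) :=
          hcomp a g b (S.inv g) a hga hgb (by rw [S.t_inv]; exact hgb)
            (by rw [S.d_inv]; exact hga) (S.t_inv g).symm
        rw [s1, S.mul_inv]
        have s2 : m (some (a, S.unit (S.t g), a)) (some (a, g, b))
            = some (a, S.mul (S.unit (S.t g)) g, b) :=
          hcomp a (S.unit (S.t g)) a g b (by rw [S.t_unit]; exact hga)
            (by rw [S.d_unit]; exact hga) hga hgb (by rw [S.d_unit])
        rw [s2, S.unit_mul]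
      · have s1 : m (some (b, S.inv g, a)) (some (a, g, b))
            = some (b, S.mul (S.inv g) g, b) :=
          hcomp b (S.inv g) a g b (by rw [S.t_inv]; exact hgb)
            (by rw [S.d_inv]; exact hga) hga hgb (S.d_inv g)
        rw [s1, S.inv_mul]
        have s2 : m (some (b, S.unit (S.d g), b)) (some (b, S.inv g, a))
            = some (b, S.mul (S.unit (S.d g)) (S.inv g), a) :=
          hcomp b (S.unit (S.d g)) b (S.inv g) a (by rw [S.t_unit]; exact hgb)
            (by rw [S.d_unit]; exact hgb) (by rw [S.t_inv]; exact hgb)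
            (by rw [S.d_inv]; exact hga) (by rw [S.d_unit, S.t_inv])
        rw [s2]
        have s3 : S.mul (S.unit (S.d g)) (S.inv g) = S.inv g := by
          have h := S.unit_mul (S.inv g)
          rwa [S.t_inv] at h
        rw [s3]
  -- characterization of nonzero idempotents
  have hidem : ∀ x, SGEMem S x → x ≠ none →
      (m x x = x ↔ ∃ a : Pth E, x = some (a, S.unit a.src, a)) := by
    rintro (_ | ⟨a, g, b⟩) hx hne
    · exact absurd rfl hne
    · have hga : S.t g = a.src := hx.1
      have hgb : S.d g = b.src := hx.2
      constructor
      · intro hxx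
        by_cases h1 : ∃ μ : Pth E, μ.rng = a.src ∧ b = a.concat μ
        · obtain ⟨μ, hμr, hμe⟩ := h1
          have hmm := hcase1 a g b a g b μ hga hgb hga hgb hμr hμe
          rw [hxx] at hmm
          injection hmm with hmm2
          have h3rd : b = b.concat (S.act (S.inv g) μ) :=
            congrArg (fun z : Pth E × α × Pth E => z.2.2) hmm2
          have h2nd : g = S.mul g (resP g (S.act (S.inv g) μ)) :=
            congrArg (fun z : Pth E × α × Pth E => z.2.1) hmm2
          have hμt : μ.rng = S.d (S.inv g) := by rw [S.d_inv]; exact hμr.trans hga.symm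
          have hνr : (S.act (S.inv g) μ).rng = b.src := by
            rw [S.act_rng _ _ hμt, S.t_inv]; exact hgb
          have hνnil : (S.act (S.inv g) μ).edges = [] := by
            have hl := congrArg (fun z : Pth E => z.edges.length) h3rd
            simp only [Aux.concat_edges hνr, List.length_append] at hl
            exact List.length_eq_zero_iff.mp (by omega)
          have hμnil : μ.edges = [] := by
            have hl := S.act_len (S.inv g) μ hμt
            rw [hνnil] at hl
            exact List.length_eq_zero_iff.mp (by simpa using hl.symm)
          have hμv : μ = Pth.ofVertex a.src :=
            Aux.pext hμr hμnil ((Aux.nil_src hμnil).symm.trans hμr)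
          have hba : b = a := by rw [hμe, hμv, Aux.concat_vertex]
          have hdt : S.d g = S.t g := by rw [hgb, hba, ← hga]
          have hν2 : S.act (S.inv g) μ = Pth.ofVertex (S.d g) := by
            rw [hμv, ← hga, ← S.d_inv g, S.act_vertex, S.t_inv]
          have hgg : S.mul g g = g := by
            have h2 := h2nd
            rw [hν2, hresV g] at h2
            exact h2.symm
          have hgu : g = S.unit a.src := by
            rw [← hga]; exact Aux.idem_unit S hdt hgg
          exact ⟨a, by rw [hba, hgu]⟩
        · by_cases h2 : ∃ μ : Pth E, μ.rng = b.src ∧ a = b.concat μ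
          · obtain ⟨μ, hμr, hμe⟩ := h2
            have hmm := hcase2 a g b a g b μ hga hgb hga hgb hμr hμe
            rw [hxx] at hmm
            injection hmm with hmm2
            have h1st : a = a.concat (S.act g μ) :=
              congrArg (fun z : Pth E × α × Pth E => z.1) hmm2
            have hμd : μ.rng = S.d g := hμr.trans hgb.symm
            have hagr : (S.act g μ).rng = a.src := by
              rw [S.act_rng g μ hμd]; exact hga
            have hgnil : (S.act g μ).edges = [] := by
              have hl := congrArg (fun z : Pth E => z.edges.length) h1st
              simp only [Aux.concat_edges hagr, List.length_append] at hl
              exact List.length_eq_zero_iff.mp (by omega)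
            have hμnil : μ.edges = [] := by
              have hl := S.act_len g μ hμd
              rw [hgnil] at hl
              exact List.length_eq_zero_iff.mp (by simpa using hl.symm)
            have hμv : μ = Pth.ofVertex b.src :=
              Aux.pext hμr hμnil ((Aux.nil_src hμnil).symm.trans hμr)
            have hab : a = b := by rw [hμe, hμv, Aux.concat_vertex]
            exact absurd ⟨Pth.ofVertex a.src, rfl,
              by rw [← hab, Aux.concat_vertex]⟩ h1
          · have hmm := hcase3 a g b a g b hga hgb hga hgb h1 h2
            rw [hxx] at hmm
            exact nomatch hmm
      · rintro ⟨c, hc⟩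
        rw [hc]
        have hc1 := hcomp c (S.unit c.src) c (S.unit c.src) c
          (by rw [S.t_unit]) (by rw [S.d_unit]) (by rw [S.t_unit]) (by rw [S.d_unit])
          (by rw [S.d_unit, S.t_unit])
        rw [hc1]
        have hc2 : S.mul (S.unit c.src) (S.unit c.src) = S.unit c.src := by
          have h := S.unit_mul (S.unit c.src)
          rwa [S.t_unit] at h
        rw [hc2]
  -- idempotents commute
  have hcommute : ∀ x y, SGEMem S x → SGEMem S y → m x x = x → m y y = y →
      m x y = m y x := by
    rintro (_ | x') (_ | y') hx hy hxx hyy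
    · rfl
    · rw [hzero_l, hzero_r]
    · rw [hzero_l, hzero_r]
    · obtain ⟨c, hc⟩ := (hidem _ hx (Option.some_ne_none x')).mp hxx
      obtain ⟨e, he⟩ := (hidem _ hy (Option.some_ne_none y')).mp hyy
      rw [hc, he]
      have t1 : S.t (S.unit c.src) = c.src := S.t_unit _
      have d1 : S.d (S.unit c.src) = c.src := S.d_unit _
      have t2 : S.t (S.unit e.src) = e.src := S.t_unit _
      have d2 : S.d (S.unit e.src) = e.src := S.d_unit _
      by_cases h1 : ∃ μ : Pth E, μ.rng = e.src ∧ c = e.concat μ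
      · obtain ⟨μ, hμr, hμe⟩ := h1
        have hsrc : c.src = μ.src := by rw [hμe, Aux.concat_src hμr]
        have m1 := hcase1 c (S.unit c.src) c e (S.unit e.src) e μ t1 d1 t2 d2 hμr hμe
        have hν : S.act (S.inv (S.unit e.src)) μ = μ := by
          rw [Aux.inv_unit S, S.act_unit e.src μ hμr]
        rw [hν, hresU e.src μ hμr] at m1
        have hm : S.mul (S.unit c.src) (S.unit μ.src) = S.unit c.src := by
          rw [hsrc]
          have h := S.unit_mul (S.unit μ.src)
          rwa [S.t_unit] at h
        rw [hm, ← hμe] at m1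
        have m2 := hcase2 e (S.unit e.src) e c (S.unit c.src) c μ t2 d2 t1 d1 hμr hμe
        rw [S.act_unit e.src μ hμr, hresU e.src μ hμr, ← hμe] at m2
        have hm2 : S.mul (S.unit μ.src) (S.unit c.src) = S.unit c.src := by
          rw [hsrc]
          have h := S.unit_mul (S.unit μ.src)
          rwa [S.t_unit] at h
        rw [hm2] at m2
        rw [m1, m2]
      · by_cases h2 : ∃ μ : Pth E, μ.rng = c.src ∧ e = c.concat μ
        · obtain ⟨μ, hμr, hμe⟩ := h2
          have hsrc : e.src = μ.src := by rw [hμe, Aux.concat_src hμr]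
          have m1 := hcase1 e (S.unit e.src) e c (S.unit c.src) c μ t2 d2 t1 d1 hμr hμe
          have hν : S.act (S.inv (S.unit c.src)) μ = μ := by
            rw [Aux.inv_unit S, S.act_unit c.src μ hμr]
          rw [hν, hresU c.src μ hμr] at m1
          have hm : S.mul (S.unit e.src) (S.unit μ.src) = S.unit e.src := by
            rw [hsrc]
            have h := S.unit_mul (S.unit μ.src)
            rwa [S.t_unit] at h
          rw [hm, ← hμe] at m1
          have m2 := hcase2 c (S.unit c.src) c e (S.unit e.src) e μ t1 d1 t2 d2 hμr hμe
          rw [S.act_unit c.src μ hμr, hresU c.src μ hμr, ← hμe] at m2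
          have hm2 : S.mul (S.unit μ.src) (S.unit e.src) = S.unit e.src := by
            rw [hsrc]
            have h := S.unit_mul (S.unit μ.src)
            rwa [S.t_unit] at h
          rw [hm2] at m2
          rw [m1, m2]
        · have m1 := hcase3 c (S.unit c.src) c e (S.unit e.src) e t1 d1 t2 d2 h1 h2
          have m2 := hcase3 e (S.unit e.src) e c (S.unit c.src) c t2 d2 t1 d1 h2 h1
          rw [m1, m2]
  exact ⟨hassoc, hsss, hcommute, hidem, hcomp⟩
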